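/- Let H be a smooth affine group scheme over Spec(W(k)) with a closed embedding H ↪ GL(O) for a free W(k)-module O of finite rank, k perfect of characteristic p. Let l ∈ ℕ and let g ∈ H(W(k)) be congruent mod p^l to 1_O. Then for any i ∈ {1,...,l} there exists z ∈ Lie(H) such that g is congruent mod p^{i+l} to 1_O + p^l·z. -/

import Mathlib

noncomputable section

/-- A closed subgroup scheme `H` of `GL_O` (with `O` free of rank `r`) over `W(k)`, given by
its functor of points: for every commutative `W(k)`-algebra `S`, a subgroup `H(S)` of
`GL_r(S)`, cut out by polynomial equations in the matrix entries of `g` and `g⁻¹`. -/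
structure ClosedSubgroupGL (p : ℕ) [Fact p.Prime] (k : Type) [CommRing k] (r : ℕ) where
  pts : ∀ (S : Type) [CommRing S] [Algebra (WittVector p k) S],
    Set ((Matrix (Fin r) (Fin r) S)ˣ)
  closed : ∃ T : Set (MvPolynomial ((Fin r × Fin r) ⊕ (Fin r × Fin r)) (WittVector p k)),
    ∀ (S : Type) [CommRing S] [Algebra (WittVector p k) S],
      ∀ g : (Matrix (Fin r) (Fin r) S)ˣ,
        g ∈ pts S ↔ ∀ f ∈ T,
          MvPolynomial.aeval
            (Sum.elim (fun ij : Fin r × Fin r => (g : Matrix (Fin r) (Fin r) S) ij.1 ij.2)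
              (fun ij : Fin r × Fin r =>
                ((g⁻¹ : (Matrix (Fin r) (Fin r) S)ˣ) : Matrix (Fin r) (Fin r) S) ij.1 ij.2))
            f = 0
  one_mem : ∀ (S : Type) [CommRing S] [Algebra (WittVector p k) S], 1 ∈ pts S
  mul_mem : ∀ (S : Type) [CommRing S] [Algebra (WittVector p k) S],
    ∀ g h : (Matrix (Fin r) (Fin r) S)ˣ, g ∈ pts S → h ∈ pts S → g * h ∈ pts S
  inv_mem : ∀ (S : Type) [CommRing S] [Algebra (WittVector p k) S],
    ∀ g : (Matrix (Fin r) (Fin r) S)ˣ, g ∈ pts S → g⁻¹ ∈ pts S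

/-- `H` is smooth over `Spec W(k)`: it is formally smooth, i.e. points lift through
square-zero extensions. -/
def IsSmoothGS (p : ℕ) [Fact p.Prime] (k : Type) [CommRing k] (r : ℕ)
    (H : ClosedSubgroupGL p k r) : Prop :=
  ∀ (S : Type) [CommRing S] [Algebra (WittVector p k) S] (J : Ideal S), J ^ 2 = ⊥ →
    ∀ h ∈ H.pts (S ⧸ J), ∃ g ∈ H.pts S,
      Units.map (RingHom.toMonoidHom ((Ideal.Quotient.mk J).mapMatrix)) g = h

/-- `Lie(H) ⊆ End(O)`: the matrices `z` with `1 + ε z ∈ H(W(k)[ε])`. -/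
def LieGS (p : ℕ) [Fact p.Prime] (k : Type) [CommRing k] (r : ℕ)
    (H : ClosedSubgroupGL p k r) : Set (Matrix (Fin r) (Fin r) (WittVector p k)) :=
  {z | ∃ u : (Matrix (Fin r) (Fin r) (DualNumber (WittVector p k)))ˣ,
    (u : Matrix (Fin r) (Fin r) (DualNumber (WittVector p k))) =
      1 + (DualNumber.eps : DualNumber (WittVector p k)) •
        (z.map (algebraMap (WittVector p k) (DualNumber (WittVector p k)))) ∧
    u ∈ H.pts (DualNumber (WittVector p k))}

open MvPolynomial TrivSqZeroExt
set_option linter.unusedSectionVars false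
set_option synthInstance.maxHeartbeats 400000
set_option maxHeartbeats 1000000

theorem one_add_mul_one_sub_of_sq {α : Type} [Ring α] (n : α) (h : n * n = 0) :
    (1 + n) * (1 - n) = 1 := by
  rw [mul_sub, mul_one, add_mul, one_mul, h, add_zero, add_sub_cancel_right]

theorem one_sub_mul_one_add_of_sq {α : Type} [Ring α] (n : α) (h : n * n = 0) :
    (1 - n) * (1 + n) = 1 := by
  rw [sub_mul, one_mul, mul_add, mul_one, h, add_zero, add_sub_cancel_right]

theorem aux_aeval {W : Type} [CommRing W]
    {r : ℕ} {A B : Type} [CommRing A] [CommRing B]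
    [Algebra W A] [Algebra W B] (φ : A →ₐ[W] B)
    (u : (Matrix (Fin r) (Fin r) A)ˣ) (v : (Matrix (Fin r) (Fin r) B)ˣ)
    (huv : ∀ a b, φ ((u : Matrix (Fin r) (Fin r) A) a b) = (v : Matrix (Fin r) (Fin r) B) a b)
    (f : MvPolynomial ((Fin r × Fin r) ⊕ (Fin r × Fin r)) W) :
    φ (aeval (Sum.elim (fun ij : Fin r × Fin r => (u : Matrix (Fin r) (Fin r) A) ij.1 ij.2)
        (fun ij : Fin r × Fin r =>
          ((u⁻¹ : (Matrix (Fin r) (Fin r) A)ˣ) : Matrix (Fin r) (Fin r) A) ij.1 ij.2)) f)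
      = aeval (Sum.elim (fun ij : Fin r × Fin r => (v : Matrix (Fin r) (Fin r) B) ij.1 ij.2)
        (fun ij : Fin r × Fin r =>
          ((v⁻¹ : (Matrix (Fin r) (Fin r) B)ˣ) : Matrix (Fin r) (Fin r) B) ij.1 ij.2)) f := by
  have hv : Units.map (RingHom.toMonoidHom (φ : A →+* B).mapMatrix) u = v := by
    apply Units.ext
    ext a b
    simpa [RingHom.mapMatrix_apply, Matrix.map_apply] using huv a b
  have hinv : ∀ a b, φ (((u⁻¹ : (Matrix (Fin r) (Fin r) A)ˣ) : Matrix (Fin r) (Fin r) A) a b)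
      = ((v⁻¹ : (Matrix (Fin r) (Fin r) B)ˣ) : Matrix (Fin r) (Fin r) B) a b := by
    intro a b
    rw [← hv, ← map_inv]
    simp [RingHom.mapMatrix_apply, Matrix.map_apply]
  rw [comp_aeval_apply]
  have he : (fun s => φ (Sum.elim (fun ij : Fin r × Fin r => (u : Matrix (Fin r) (Fin r) A) ij.1 ij.2)
        (fun ij : Fin r × Fin r =>
          ((u⁻¹ : (Matrix (Fin r) (Fin r) A)ˣ) : Matrix (Fin r) (Fin r) A) ij.1 ij.2) s))
      = (Sum.elim (fun ij : Fin r × Fin r => (v : Matrix (Fin r) (Fin r) B) ij.1 ij.2)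
        (fun ij : Fin r × Fin r =>
          ((v⁻¹ : (Matrix (Fin r) (Fin r) B)ˣ) : Matrix (Fin r) (Fin r) B) ij.1 ij.2)) := by
    funext s
    cases s with
    | inl ij => exact huv ij.1 ij.2
    | inr ij => exact hinv ij.1 ij.2
  rw [he]

section AuxDefs

variable (p : ℕ) [Fact p.Prime] (k : Type) [Field k] [CharP k p] [PerfectRing k p]

/-- The generator `p^i ε` of the square-zero ideal in `W(k)[ε]`. -/
def genD (i : ℕ) : DualNumber (WittVector p k) :=
  (p : DualNumber (WittVector p k)) ^ i * DualNumber.eps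

/-- The ideal `(p^i ε)` in `W(k)[ε]`. -/
def JD (i : ℕ) : Ideal (DualNumber (WittVector p k)) := Ideal.span {genD p k i}

lemma fst_genD (i : ℕ) : (genD p k i).fst = 0 := by simp [genD]

lemma snd_genD (i : ℕ) : (genD p k i).snd = (p : WittVector p k) ^ i := by
  simp [genD, DualNumber.snd_mul]

lemma JD_sq (i : ℕ) : JD p k i ^ 2 = ⊥ := by
  rw [JD, Ideal.span_singleton_pow, Ideal.span_singleton_eq_bot, genD, mul_pow, pow_two DualNumber.eps,
    DualNumber.eps_mul_eps, mul_zero]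

/-- The ideal `(p^n)` in `W(k)`. -/
def ID (n : ℕ) : Ideal (WittVector p k) := Ideal.span {(p : WittVector p k) ^ n}

/-- The first projection `W(k)[ε]/(p^i ε) → W(k)`. -/
def piD (i : ℕ) : (DualNumber (WittVector p k) ⧸ JD p k i) →ₐ[WittVector p k] WittVector p k :=
  Ideal.Quotient.liftₐ _
    (TrivSqZeroExt.fstHom (WittVector p k) (WittVector p k) (WittVector p k))
    (by
      intro a ha
      rw [JD, Ideal.mem_span_singleton] at ha
      obtain ⟨c, rfl⟩ := ha
      rw [map_mul]
      have h0 : (TrivSqZeroExt.fstHom (WittVector p k) (WittVector p k) (WittVector p k))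
          (genD p k i) = 0 := fst_genD p k i
      rw [h0, zero_mul])

lemma piD_mk (i : ℕ) (x : DualNumber (WittVector p k)) :
    piD p k i (Ideal.Quotient.mk (JD p k i) x) = x.fst := by
  simp [piD]
  rfl

/-- The algebra map `W(k)[ε] → W(k)/(p^{i+l})`, `ε ↦ p^l`. -/
def chiD0 (i l : ℕ) (hil : i ≤ l) :
    DualNumber (WittVector p k) →ₐ[WittVector p k] (WittVector p k ⧸ ID p k (i + l)) :=
  DualNumber.lift ⟨(Ideal.Quotient.mkₐ (WittVector p k) (ID p k (i + l)),
      Ideal.Quotient.mk (ID p k (i + l)) ((p : WittVector p k) ^ l)),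
    by
      rw [← map_mul, ← pow_add, Ideal.Quotient.eq_zero_iff_mem, ID, Ideal.mem_span_singleton]
      exact pow_dvd_pow _ (by omega),
    fun a => Commute.all _ _⟩

lemma chiD0_apply (i l : ℕ) (hil : i ≤ l) (x : DualNumber (WittVector p k)) :
    chiD0 p k i l hil x =
      Ideal.Quotient.mk (ID p k (i + l)) (x.fst + x.snd * (p : WittVector p k) ^ l) := by
  rw [chiD0, DualNumber.lift_apply_apply, Ideal.Quotient.mkₐ_eq_mk, map_add, map_mul]

lemma chiD0_genD (i l : ℕ) (hil : i ≤ l) : chiD0 p k i l hil (genD p k i) = 0 := by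
  rw [chiD0_apply, fst_genD, snd_genD, zero_add, ← pow_add,
    Ideal.Quotient.eq_zero_iff_mem, ID, Ideal.mem_span_singleton]

/-- The algebra map `W(k)[ε]/(p^i ε) → W(k)/(p^{i+l})`, `ε ↦ p^l`. -/
def chiD (i l : ℕ) (hil : i ≤ l) :
    (DualNumber (WittVector p k) ⧸ JD p k i) →ₐ[WittVector p k]
      (WittVector p k ⧸ ID p k (i + l)) :=
  Ideal.Quotient.liftₐ _ (chiD0 p k i l hil)
    (by
      intro a ha
      rw [JD, Ideal.mem_span_singleton] at ha
      obtain ⟨c, rfl⟩ := ha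
      rw [map_mul, chiD0_genD, zero_mul])

lemma chiD_mk (i l : ℕ) (hil : i ≤ l) (x : DualNumber (WittVector p k)) :
    chiD p k i l hil (Ideal.Quotient.mk (JD p k i) x) =
      Ideal.Quotient.mk (ID p k (i + l)) (x.fst + x.snd * (p : WittVector p k) ^ l) := by
  rw [chiD, Ideal.Quotient.liftₐ_apply]
  exact chiD0_apply p k i l hil x

/-- Injectivity on the relevant part: an element of `W(k)[ε]/(p^i ε)` killed by both `piD`
and `chiD` is zero. -/
lemma eq_zero_of_piD_chiD (i l : ℕ) (hil : i ≤ l)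
    (x : DualNumber (WittVector p k) ⧸ JD p k i)
    (h1 : piD p k i x = 0) (h2 : chiD p k i l hil x = 0) : x = 0 := by
  obtain ⟨d, rfl⟩ := Ideal.Quotient.mk_surjective x
  rw [piD_mk] at h1
  rw [chiD_mk, h1, zero_add, Ideal.Quotient.eq_zero_iff_mem, ID,
    Ideal.mem_span_singleton] at h2
  obtain ⟨c, hc⟩ := h2
  have hp : ((p : WittVector p k) ^ l) ≠ 0 := pow_ne_zero _ (WittVector.p_nonzero p k)
  have hd : d.snd = (p : WittVector p k) ^ i * c := by
    apply mul_right_cancel₀ hp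
    rw [hc]; ring
  rw [Ideal.Quotient.eq_zero_iff_mem, JD, Ideal.mem_span_singleton]
  refine ⟨TrivSqZeroExt.inl c, ?_⟩
  ext
  · simp [h1, fst_mul, fst_genD]
  · simp [hd, DualNumber.snd_mul, fst_genD, snd_genD, mul_comm]

end AuxDefs

/-- Let `H` be a smooth affine group scheme over `Spec W(k)` with a closed
embedding `H ↪ GL(O)`, `O` free of finite rank.  If `g ∈ H(W(k))` is congruent to `1_O`
modulo `p^l`, then for every `i ∈ {1,…,l}` there exists `z ∈ Lie(H)` such that `g` is
congruent to `1_O + p^l z` modulo `p^{i+l}`. -/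
theorem stmt2 (p : ℕ) [Fact p.Prime] (k : Type) [Field k] [CharP k p] [PerfectRing k p]
    (r : ℕ) (H : ClosedSubgroupGL p k r) (hsmooth : IsSmoothGS p k r H)
    (l : ℕ) (hl : 1 ≤ l)
    (g : (Matrix (Fin r) (Fin r) (WittVector p k))ˣ) (hg : g ∈ H.pts (WittVector p k))
    (hcong : ∃ y : Matrix (Fin r) (Fin r) (WittVector p k),
      (g : Matrix (Fin r) (Fin r) (WittVector p k)) = 1 + ((p : WittVector p k) ^ l) • y) :
    ∀ i : ℕ, 1 ≤ i → i ≤ l →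
      ∃ z ∈ LieGS p k r H, ∃ w : Matrix (Fin r) (Fin r) (WittVector p k),
        (g : Matrix (Fin r) (Fin r) (WittVector p k)) =
          1 + ((p : WittVector p k) ^ l) • z + ((p : WittVector p k) ^ (i + l)) • w := by
  classical
  intro i hi1 hil
  obtain ⟨y, hy⟩ := hcong
  obtain ⟨T, hT⟩ := H.closed
  set N : Matrix (Fin r) (Fin r) (DualNumber (WittVector p k)) :=
    (DualNumber.eps : DualNumber (WittVector p k)) •
      (y.map (algebraMap (WittVector p k) (DualNumber (WittVector p k)))) with hN
  have hNab : ∀ a b, N a b = (DualNumber.eps : DualNumber (WittVector p k)) *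
      TrivSqZeroExt.inl (y a b) := by
    intro a b
    rw [hN, Matrix.smul_apply, Matrix.map_apply, smul_eq_mul, TrivSqZeroExt.algebraMap_eq_inl']
    simp
  have hNfst : ∀ a b, (N a b).fst = 0 := by
    intro a b; rw [hNab]; simp [fst_mul]
  have hNsnd : ∀ a b, (N a b).snd = y a b := by
    intro a b; rw [hNab]; simp [DualNumber.snd_mul]
  have hNN : N * N = 0 := by
    rw [hN, Matrix.smul_mul, Matrix.mul_smul, smul_smul, DualNumber.eps_mul_eps, zero_smul]
  set Nq : Matrix (Fin r) (Fin r) (DualNumber (WittVector p k) ⧸ JD p k i) :=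
    N.map (Ideal.Quotient.mk (JD p k i)) with hNq
  have hNqNq : Nq * Nq = 0 := by
    rw [hNq, ← Matrix.map_mul, hNN]
    ext a b; simp
  have e1 : ((1 : Matrix (Fin r) (Fin r) (DualNumber (WittVector p k) ⧸ JD p k i)) + Nq)
      * (1 - Nq) = 1 := one_add_mul_one_sub_of_sq Nq hNqNq
  have e2 : ((1 : Matrix (Fin r) (Fin r) (DualNumber (WittVector p k) ⧸ JD p k i)) - Nq)
      * (1 + Nq) = 1 := one_sub_mul_one_add_of_sq Nq hNqNq
  set hu : (Matrix (Fin r) (Fin r) (DualNumber (WittVector p k) ⧸ JD p k i))ˣ :=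
    ⟨1 + Nq, 1 - Nq, e1, e2⟩ with hhu
  have h1fst : ∀ a b, ((1 : Matrix (Fin r) (Fin r) (DualNumber (WittVector p k))) a b).fst
      = (1 : Matrix (Fin r) (Fin r) (WittVector p k)) a b := by
    intro a b
    by_cases hab : a = b <;> simp [hab, Matrix.one_apply]
  have h1snd : ∀ a b, ((1 : Matrix (Fin r) (Fin r) (DualNumber (WittVector p k))) a b).snd
      = 0 := by
    intro a b
    by_cases hab : a = b <;> simp [hab, Matrix.one_apply]
  -- membership of hu in H.pts of the quotient
  have hmem : hu ∈ H.pts (DualNumber (WittVector p k) ⧸ JD p k i) := by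
    rw [hT]
    intro f hf
    have hone : ∀ a b, piD p k i ((hu : Matrix (Fin r) (Fin r) _) a b)
        = ((1 : (Matrix (Fin r) (Fin r) (WittVector p k))ˣ) :
            Matrix (Fin r) (Fin r) (WittVector p k)) a b := by
      intro a b
      show piD p k i ((1 + Nq) a b) = (1 : Matrix (Fin r) (Fin r) (WittVector p k)) a b
      rw [Matrix.add_apply, map_add]
      have h2 : piD p k i (Nq a b) = 0 := by
        rw [hNq, Matrix.map_apply, piD_mk, hNfst]
      rw [h2, add_zero]
      by_cases hab : a = b
      · subst hab; simp [Matrix.one_apply]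
      · simp [Matrix.one_apply, hab]
    have hπ : piD p k i (aeval
        (Sum.elim (fun ij : Fin r × Fin r => (hu : Matrix (Fin r) (Fin r) _) ij.1 ij.2)
          (fun ij : Fin r × Fin r => ((hu⁻¹ : _ˣ) : Matrix (Fin r) (Fin r) _) ij.1 ij.2)) f)
        = 0 := by
      rw [aux_aeval (W := WittVector p k) (A := DualNumber (WittVector p k) ⧸ JD p k i) (B := WittVector p k) (piD p k i) hu 1 hone f]
      exact (hT _ 1).mp (H.one_mem _) f hf
    have hgq : ∀ a b, chiD p k i l hil ((hu : Matrix (Fin r) (Fin r) _) a b)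
        = ((Units.map (RingHom.toMonoidHom
              (Ideal.Quotient.mk (ID p k (i + l))).mapMatrix) g : _ˣ) :
            Matrix (Fin r) (Fin r) _) a b := by
      intro a b
      have hr : ((Units.map (RingHom.toMonoidHom
            (Ideal.Quotient.mk (ID p k (i + l))).mapMatrix) g : _ˣ) :
            Matrix (Fin r) (Fin r) _) a b
          = Ideal.Quotient.mk (ID p k (i + l))
              ((g : Matrix (Fin r) (Fin r) (WittVector p k)) a b) := rfl
      rw [hr, hy]
      show chiD p k i l hil ((1 + Nq) a b) = _
      rw [Matrix.add_apply, map_add]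
      have h2 : chiD p k i l hil (Nq a b)
          = Ideal.Quotient.mk (ID p k (i + l)) ((p : WittVector p k) ^ l * y a b) := by
        rw [hNq, Matrix.map_apply, chiD_mk, hNfst, hNsnd, zero_add, mul_comm]
      rw [h2, Matrix.add_apply, map_add, Matrix.smul_apply, smul_eq_mul]
      congr 1
      by_cases hab : a = b
      · subst hab; simp [Matrix.one_apply]
      · simp [Matrix.one_apply, hab]
    have hχ : chiD p k i l hil (aeval
        (Sum.elim (fun ij : Fin r × Fin r => (hu : Matrix (Fin r) (Fin r) _) ij.1 ij.2)
          (fun ij : Fin r × Fin r => ((hu⁻¹ : _ˣ) : Matrix (Fin r) (Fin r) _) ij.1 ij.2)) f)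
        = 0 := by
      rw [aux_aeval (W := WittVector p k) (A := DualNumber (WittVector p k) ⧸ JD p k i) (B := WittVector p k ⧸ ID p k (i + l)) (chiD p k i l hil) hu _ hgq f]
      rw [← aux_aeval (Ideal.Quotient.mkₐ (WittVector p k) (ID p k (i + l))) g
        (Units.map (RingHom.toMonoidHom (Ideal.Quotient.mk (ID p k (i + l))).mapMatrix) g)
        (fun a b => by rw [Ideal.Quotient.mkₐ_eq_mk]; rfl) f]
      rw [(hT _ g).mp hg f hf, map_zero]
    exact eq_zero_of_piD_chiD p k i l hil _ hπ hχ
  -- lift by smoothness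
  obtain ⟨u, huH, humap⟩ :=
    hsmooth (DualNumber (WittVector p k)) (JD p k i) (JD_sq p k i) hu hmem
  have hentry : ∀ a b, ∃ c : DualNumber (WittVector p k),
      (u : Matrix (Fin r) (Fin r) (DualNumber (WittVector p k))) a b
        = ((1 : Matrix (Fin r) (Fin r) (DualNumber (WittVector p k))) + N) a b
          + genD p k i * c := by
    intro a b
    have hval : (Ideal.Quotient.mk (JD p k i)).mapMatrix
        (u : Matrix (Fin r) (Fin r) (DualNumber (WittVector p k))) = 1 + Nq :=
      congrArg Units.val humap
    have h2 : ((Ideal.Quotient.mk (JD p k i)).mapMatrix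
        (u : Matrix (Fin r) (Fin r) (DualNumber (WittVector p k)))) a b = (1 + Nq) a b := by
      rw [hval]
    rw [RingHom.mapMatrix_apply, Matrix.map_apply] at h2
    have h3 : Ideal.Quotient.mk (JD p k i)
        ((u : Matrix (Fin r) (Fin r) (DualNumber (WittVector p k))) a b)
        = Ideal.Quotient.mk (JD p k i)
            (((1 : Matrix (Fin r) (Fin r) (DualNumber (WittVector p k))) + N) a b) := by
      rw [h2, Matrix.add_apply, Matrix.add_apply, map_add]
      congr 1
      by_cases hab : a = b
      · subst hab; simp [Matrix.one_apply]
      · simp [Matrix.one_apply, hab]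
    rw [Ideal.Quotient.eq, JD, Ideal.mem_span_singleton] at h3
    obtain ⟨c, hc⟩ := h3
    exact ⟨c, by linear_combination hc⟩
  choose c hc using hentry
  have husnd : ∀ a b, ((u : Matrix (Fin r) (Fin r) (DualNumber (WittVector p k))) a b).snd
      = y a b + (p : WittVector p k) ^ i * (c a b).fst := by
    intro a b
    rw [hc a b]
    simp [Matrix.add_apply, hNsnd, h1snd, DualNumber.snd_mul, fst_genD, snd_genD, mul_comm]
  have hufst : ∀ a b, ((u : Matrix (Fin r) (Fin r) (DualNumber (WittVector p k))) a b).fst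
      = (1 : Matrix (Fin r) (Fin r) (WittVector p k)) a b := by
    intro a b
    rw [hc a b]
    simp [Matrix.add_apply, hNfst, h1fst, fst_mul, fst_genD]
  refine ⟨fun a b => ((u : Matrix (Fin r) (Fin r) (DualNumber (WittVector p k))) a b).snd,
    ⟨u, ?_, huH⟩, fun a b => -((c a b).fst), ?_⟩
  · refine Matrix.ext fun a b => TrivSqZeroExt.ext ?_ ?_
    · rw [hufst a b, Matrix.add_apply, TrivSqZeroExt.fst_add, h1fst, Matrix.smul_apply]
      simp [fst_mul]
    · rw [Matrix.add_apply, TrivSqZeroExt.snd_add, h1snd, Matrix.smul_apply]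
      simp [DualNumber.snd_mul, TrivSqZeroExt.algebraMap_eq_inl']
      rfl
  · rw [hy]
    refine Matrix.ext fun a b => ?_
    simp only [Matrix.add_apply, Matrix.smul_apply, smul_eq_mul, husnd]
    erw [Matrix.smul_apply, Matrix.smul_apply]
    simp only [smul_eq_mul]
    rw [pow_add]
    ring
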